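/- Fix σ > 0, γ > 0 and 0 ≤ d₁ < d₂. If w₁ ∈ (0, 1] is a global minimizer over (0, 1] of g_{d₁}(w) = w(1 − w)σ² + w²·d₁² − (γ/2)·ln w, and w₂ ∈ (0, 1] is a global minimizer over (0, 1] of g_{d₂}(w) = w(1 − w)σ² + w²·d₂² − (γ/2)·ln w, then w₂ ≤ w₁. That is, more unique users choose more informative signals: the optimal weight is nonincreasing (equivalently, the communication cost −(1/2)·ln w is nondecreasing) in the uniqueness d = |θ − μ|. -/
import Mathlib

/-- More unique users choose more informative signals: if `w₁` minimizes the
utility loss for uniqueness `d₁` and `w₂` minimizes it for uniqueness `d₂ > d₁`,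
then `w₂ ≤ w₁` (the optimal weight on the AI prior mean is nonincreasing in the
uniqueness, equivalently the communication cost `−(1/2)·ln w` is nondecreasing). -/
theorem optimal_weight_antitone (σ γ d₁ d₂ w₁ w₂ : ℝ) (hσ : 0 < σ) (hγ : 0 < γ)
    (hd₁ : 0 ≤ d₁) (hd : d₁ < d₂)
    (hw₁ : w₁ ∈ Set.Ioc (0 : ℝ) 1) (hw₂ : w₂ ∈ Set.Ioc (0 : ℝ) 1)
    (hmin₁ : ∀ w ∈ Set.Ioc (0 : ℝ) 1,
      w₁ * (1 - w₁) * σ ^ 2 + w₁ ^ 2 * d₁ ^ 2 - γ / 2 * Real.log w₁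
        ≤ w * (1 - w) * σ ^ 2 + w ^ 2 * d₁ ^ 2 - γ / 2 * Real.log w)
    (hmin₂ : ∀ w ∈ Set.Ioc (0 : ℝ) 1,
      w₂ * (1 - w₂) * σ ^ 2 + w₂ ^ 2 * d₂ ^ 2 - γ / 2 * Real.log w₂
        ≤ w * (1 - w) * σ ^ 2 + w ^ 2 * d₂ ^ 2 - γ / 2 * Real.log w) :
    w₂ ≤ w₁ := by
  have h1 := hmin₁ w₂ hw₂
  have h2 := hmin₂ w₁ hw₁
  have hsum : (w₂ ^ 2 - w₁ ^ 2) * (d₂ ^ 2 - d₁ ^ 2) ≤ 0 := by nlinarith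
  have hdsq : d₁ ^ 2 < d₂ ^ 2 := by nlinarith
  have hsq : w₂ ^ 2 ≤ w₁ ^ 2 := by nlinarith
  exact (pow_le_pow_iff_left₀ hw₂.1.le hw₁.1.le two_ne_zero).mp hsq
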